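/- Let Ω ⊆ ℂⁿ be open, let φ : Ω → ℝ be twice continuously differentiable with −1 ≤ φ ≤ 0 on Ω, and let A : Ω → Matrix(n, n, ℂ) assign to each point a positive semidefinite Hermitian matrix. Denote by H(u) the complex Hessian matrix with entries H(u)_{jk} = ∂²u/∂z_j∂z̄_k, and by G the Hermitian matrix with entries G_{jk} = (∂φ/∂z_j)·(∂φ/∂z̄_k). If A(z) + H(φ)(z) is positive semidefinite for every z ∈ Ω, then the matrix A(z) + (1/2)·H((φ+1)²)(z) − G(z) is positive semidefinite for every z ∈ Ω; indeed it equals (φ(z)+1)·(A(z) + H(φ)(z)) − φ(z)·A(z). -/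

import Mathlib

open Complex ComplexOrder

/-- The Wirtinger derivative `∂u/∂z_j = (1/2)(∂u/∂x_j - i ∂u/∂y_j)` of a (real-differentiable)
function `u : ℂⁿ → ℂ`, expressed via the real Fréchet derivative in the directions
`e_j` and `i e_j`. -/
noncomputable def wirtingerZ {n : ℕ} (u : (Fin n → ℂ) → ℂ) (j : Fin n) (z : Fin n → ℂ) : ℂ :=
  (1 / 2 : ℂ) * (fderiv ℝ u z (Pi.single j 1) - Complex.I * fderiv ℝ u z (Pi.single j Complex.I))

/-- The conjugate Wirtinger derivative `∂u/∂z̄_j = (1/2)(∂u/∂x_j + i ∂u/∂y_j)`. -/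
noncomputable def wirtingerZbar {n : ℕ} (u : (Fin n → ℂ) → ℂ) (j : Fin n) (z : Fin n → ℂ) : ℂ :=
  (1 / 2 : ℂ) * (fderiv ℝ u z (Pi.single j 1) + Complex.I * fderiv ℝ u z (Pi.single j Complex.I))

/-- The complex Hessian matrix `H(u)_{jk} = ∂²u/∂z_j∂z̄_k` of a function `u : ℂⁿ → ℂ`. -/
noncomputable def complexHessian {n : ℕ} (u : (Fin n → ℂ) → ℂ) (z : Fin n → ℂ) :
    Matrix (Fin n) (Fin n) ℂ :=
  Matrix.of fun j k => wirtingerZ (fun w => wirtingerZbar u k w) j z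


section Aux
variable {n : ℕ}

lemma psd_smul_ofReal {M : Matrix (Fin n) (Fin n) ℂ} (hM : M.PosSemidef) {c : ℝ}
    (hc : 0 ≤ c) : ((c : ℂ) • M).PosSemidef := by
  constructor
  · unfold Matrix.IsHermitian
    rw [Matrix.conjTranspose_smul, hM.1]
    norm_num
  · intro x
    exact (hM.smul (show (0 : ℂ) ≤ (c : ℂ) by exact_mod_cast hc)).2 x

-- Leibniz rule for wirtingerZ
lemma wirtingerZ_mul (u v : (Fin n → ℂ) → ℂ) (j : Fin n) (z : Fin n → ℂ)
    (hu : DifferentiableAt ℝ u z) (hv : DifferentiableAt ℝ v z) :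
    wirtingerZ (fun w => u w * v w) j z
      = u z * wirtingerZ v j z + wirtingerZ u j z * v z := by
  unfold wirtingerZ
  rw [fderiv_fun_mul hu hv]
  simp only [ContinuousLinearMap.add_apply, ContinuousLinearMap.smul_apply, smul_eq_mul]
  ring

lemma wirtingerZbar_mul (u v : (Fin n → ℂ) → ℂ) (j : Fin n) (z : Fin n → ℂ)
    (hu : DifferentiableAt ℝ u z) (hv : DifferentiableAt ℝ v z) :
    wirtingerZbar (fun w => u w * v w) j z
      = u z * wirtingerZbar v j z + wirtingerZbar u j z * v z := by
  unfold wirtingerZbar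
  rw [fderiv_fun_mul hu hv]
  simp only [ContinuousLinearMap.add_apply, ContinuousLinearMap.smul_apply, smul_eq_mul]
  ring

lemma wirtingerZ_add_const (u : (Fin n → ℂ) → ℂ) (c : ℂ) (j : Fin n) (z : Fin n → ℂ) :
    wirtingerZ (fun w => u w + c) j z = wirtingerZ u j z := by
  unfold wirtingerZ; rw [fderiv_add_const]

lemma wirtingerZbar_add_const (u : (Fin n → ℂ) → ℂ) (c : ℂ) (j : Fin n) (z : Fin n → ℂ) :
    wirtingerZbar (fun w => u w + c) j z = wirtingerZbar u j z := by
  unfold wirtingerZbar; rw [fderiv_add_const]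

end Aux

section Main
variable {n : ℕ}

lemma hess_sq {Ω : Set (Fin n → ℂ)} (hΩ : IsOpen Ω) {φ : (Fin n → ℂ) → ℝ}
    (hφ : ContDiffOn ℝ 2 φ Ω) {z : Fin n → ℂ} (hz : z ∈ Ω) (j k : Fin n) :
    complexHessian (fun v => (((φ v + 1) ^ 2 : ℝ) : ℂ)) z j k
      = 2 * ((φ z : ℂ) + 1) * complexHessian (fun v => ((φ v : ℝ) : ℂ)) z j k
        + 2 * wirtingerZ (fun v => ((φ v : ℝ) : ℂ)) j z
            * wirtingerZbar (fun v => ((φ v : ℝ) : ℂ)) k z := by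
  set f : (Fin n → ℂ) → ℂ := fun v => ((φ v : ℝ) : ℂ) with hfdef
  have hf : ContDiffOn ℝ 2 f Ω := Complex.ofRealCLM.contDiff.comp_contDiffOn hφ
  have hfd : DifferentiableOn ℝ f Ω := hf.differentiableOn (by norm_num)
  have hf' : ContDiffOn ℝ 1 (fderiv ℝ f) Ω := hf.fderiv_of_isOpen hΩ (by norm_num)
  have hf'd : DifferentiableOn ℝ (fderiv ℝ f) Ω := hf'.differentiableOn (by norm_num)
  have hwbar : DifferentiableOn ℝ (fun w => wirtingerZbar f k w) Ω := by
    unfold wirtingerZbar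
    exact (differentiableOn_const _).mul
      (((hf'd.clm_apply (differentiableOn_const _))).add
        ((differentiableOn_const _).mul (hf'd.clm_apply (differentiableOn_const _))))
  have hgf : (fun v => (((φ v + 1) ^ 2 : ℝ) : ℂ)) = fun v => (f v + 1) * (f v + 1) := by
    funext v; simp only [hfdef]; push_cast; ring
  have stepA : ∀ w ∈ Ω, wirtingerZbar (fun v => (((φ v + 1) ^ 2 : ℝ) : ℂ)) k w
      = 2 * (f w + 1) * wirtingerZbar f k w := by
    intro w hw
    have hdw : DifferentiableAt ℝ (fun v => f v + 1) w :=
      (hfd.differentiableAt (hΩ.mem_nhds hw)).add_const 1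
    rw [hgf, wirtingerZbar_mul _ _ _ _ hdw hdw, wirtingerZbar_add_const]
    ring
  have hEq : (fun w => wirtingerZbar (fun v => (((φ v + 1) ^ 2 : ℝ) : ℂ)) k w)
      =ᶠ[nhds z] (fun w => 2 * (f w + 1) * wirtingerZbar f k w) := by
    filter_upwards [hΩ.mem_nhds hz] with w hw using stepA w hw
  have h1 : complexHessian (fun v => (((φ v + 1) ^ 2 : ℝ) : ℂ)) z j k
      = wirtingerZ (fun w => 2 * (f w + 1) * wirtingerZbar f k w) j z := by
    show wirtingerZ _ j z = _
    unfold wirtingerZ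
    rw [hEq.fderiv_eq]
  rw [h1]
  have hu : DifferentiableAt ℝ (fun w => 2 * (f w + 1)) z :=
    ((hfd.differentiableAt (hΩ.mem_nhds hz)).add_const 1).const_mul 2
  have hv : DifferentiableAt ℝ (fun w => wirtingerZbar f k w) z :=
    hwbar.differentiableAt (hΩ.mem_nhds hz)
  rw [wirtingerZ_mul _ _ _ _ hu hv]
  have h2 : wirtingerZ (fun w => 2 * (f w + 1)) j z = 2 * wirtingerZ f j z := by
    have : (fun w => 2 * (f w + 1)) = fun w => (2 : ℂ) * f w + 2 := by funext w; ring
    rw [this]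
    unfold wirtingerZ
    rw [fderiv_add_const, fderiv_const_mul (hfd.differentiableAt (hΩ.mem_nhds hz))]
    simp only [ContinuousLinearMap.coe_smul', Pi.smul_apply, smul_eq_mul]
    ring
  have h3 : wirtingerZ (fun w => wirtingerZbar f k w) j z = complexHessian f z j k := rfl
  rw [h2, h3]

end Main

/-- Pointwise matrix form of the key inequality
`dφ ∧ d^cφ ≤ ω + (1/2) dd^c (φ+1)²` for `-1 ≤ φ ≤ 0` with `ω + dd^c φ ≥ 0`:
if `A(z) + H(φ)(z)` is positive semidefinite on `Ω`, then so is
`A(z) + (1/2) H((φ+1)²)(z) - G(z)`, where `G_{jk} = (∂φ/∂z_j)(∂φ/∂z̄_k)`; indeed the latter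
equals `(φ(z)+1)(A(z) + H(φ)(z)) - φ(z) A(z)`. -/
theorem key_matrix_inequality {n : ℕ} (Ω : Set (Fin n → ℂ)) (hΩ : IsOpen Ω)
    (φ : (Fin n → ℂ) → ℝ) (hφ : ContDiffOn ℝ 2 φ Ω)
    (hφrange : ∀ z ∈ Ω, -1 ≤ φ z ∧ φ z ≤ 0)
    (A : (Fin n → ℂ) → Matrix (Fin n) (Fin n) ℂ)
    (hA : ∀ z ∈ Ω, (A z).IsHermitian ∧ (A z).PosSemidef)
    (hAH : ∀ z ∈ Ω, (A z + complexHessian (fun v => ((φ v : ℝ) : ℂ)) z).PosSemidef) :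
    ∀ z ∈ Ω,
      (A z + ((1 / 2 : ℂ)) • complexHessian (fun v => (((φ v + 1) ^ 2 : ℝ) : ℂ)) z
          - Matrix.of (fun j k =>
              wirtingerZ (fun v => ((φ v : ℝ) : ℂ)) j z
                * wirtingerZbar (fun v => ((φ v : ℝ) : ℂ)) k z)).PosSemidef
      ∧ A z + ((1 / 2 : ℂ)) • complexHessian (fun v => (((φ v + 1) ^ 2 : ℝ) : ℂ)) z
          - Matrix.of (fun j k =>
              wirtingerZ (fun v => ((φ v : ℝ) : ℂ)) j z
                * wirtingerZbar (fun v => ((φ v : ℝ) : ℂ)) k z)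
        = ((φ z + 1 : ℝ) : ℂ) • (A z + complexHessian (fun v => ((φ v : ℝ) : ℂ)) z)
            - ((φ z : ℝ) : ℂ) • A z := by
  intro z hz
  have key : A z + ((1 / 2 : ℂ)) • complexHessian (fun v => (((φ v + 1) ^ 2 : ℝ) : ℂ)) z
          - Matrix.of (fun j k =>
              wirtingerZ (fun v => ((φ v : ℝ) : ℂ)) j z
                * wirtingerZbar (fun v => ((φ v : ℝ) : ℂ)) k z)
        = ((φ z + 1 : ℝ) : ℂ) • (A z + complexHessian (fun v => ((φ v : ℝ) : ℂ)) z)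
            - ((φ z : ℝ) : ℂ) • A z := by
    ext j k
    simp only [Matrix.sub_apply, Matrix.add_apply, Matrix.smul_apply, Matrix.of_apply,
      smul_eq_mul]
    rw [hess_sq hΩ hφ hz j k]
    push_cast
    ring
  refine ⟨?_, key⟩
  rw [key]
  have h1 : 0 ≤ φ z + 1 := by linarith [(hφrange z hz).1]
  have h2 : 0 ≤ -φ z := by linarith [(hφrange z hz).2]
  have : ((φ z + 1 : ℝ) : ℂ) • (A z + complexHessian (fun v => ((φ v : ℝ) : ℂ)) z)
      - ((φ z : ℝ) : ℂ) • A z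
      = ((φ z + 1 : ℝ) : ℂ) • (A z + complexHessian (fun v => ((φ v : ℝ) : ℂ)) z)
        + ((-φ z : ℝ) : ℂ) • A z := by
    push_cast
    rw [sub_eq_add_neg, ← neg_smul]
  rw [this]
  exact (psd_smul_ofReal (hAH z hz) h1).add (psd_smul_ofReal (hA z hz).2 h2)
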